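/- Let n ≥ 1 and let f : {0,1}^n → ℝ be a nonzero nonnegative function. Then D²(f) ≥ 4 · K²(f) · φ(Ent(f²)/K²(f)), where D²(f) = E_x Σ_{y∼x} (f(x) − f(y))², K²(f) = (1/4) · E_x Σ_{y∼x} (f(x) + f(y))², and φ : [0, 2 log 2] → [0,1] is the inverse of ψ. (Note K²(f) > 0 and Ent(f²) ≤ 2 log 2 · K²(f), so the right-hand side is well-defined.) -/

import Mathlib

/-- Expectation of `g` over the uniform measure on the Hamming cube `{0,1}^n`. -/
noncomputable def cubeE (n : ℕ) (g : (Fin n → Bool) → ℝ) : ℝ :=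
  (∑ x : Fin n → Bool, g x) / 2 ^ n

/-- `E_x ∑_{y ∼ x} (f x - f y)^2` on the Hamming cube `{0,1}^n`. -/
noncomputable def cubeD2 (n : ℕ) (f : (Fin n → Bool) → ℝ) : ℝ :=
  cubeE n (fun x => ∑ i : Fin n, (f x - f (Function.update x i (!x i))) ^ 2)

/-- `Ent(f²) = E[f² log f²] - E[f²] log E[f²]` (note `Real.log 0 = 0`). -/
noncomputable def cubeEnt (n : ℕ) (f : (Fin n → Bool) → ℝ) : ℝ :=
  cubeE n (fun x => f x ^ 2 * Real.log (f x ^ 2)) -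
    cubeE n (fun x => f x ^ 2) * Real.log (cubeE n (fun x => f x ^ 2))

/-- `K²(f) = (1/4)·E_x ∑_{y∼x} (f x + f y)²` on the Hamming cube `{0,1}^n`. -/
noncomputable def cubeK2 (n : ℕ) (f : (Fin n → Bool) → ℝ) : ℝ :=
  (1 / 4) * cubeE n (fun x => ∑ i : Fin n, (f x + f (Function.update x i (!x i))) ^ 2)

/-- `ψ(t) = (1/2)(1−√t)² log((1−√t)²) + (1/2)(1+√t)² log((1+√t)²) − (1+t) log(1+t)`
(note `Real.log 0 = 0`). -/
noncomputable def psi (t : ℝ) : ℝ :=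
  (1 / 2) * (1 - Real.sqrt t) ^ 2 * Real.log ((1 - Real.sqrt t) ^ 2) +
    (1 / 2) * (1 + Real.sqrt t) ^ 2 * Real.log ((1 + Real.sqrt t) ^ 2) -
    (1 + t) * Real.log (1 + t)


open Real

noncomputable def ent2 (a b : ℝ) : ℝ :=
  (a * Real.log a + b * Real.log b) / 2 - ((a + b) / 2) * Real.log ((a + b) / 2)

lemma ent2_comm (a b : ℝ) : ent2 a b = ent2 b a := by
  unfold ent2; rw [add_comm a b]; ring

noncomputable def kl (a s : ℝ) : ℝ := a * Real.log a - a * Real.log s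

lemma kl_zero_left (s : ℝ) : kl 0 s = 0 := by simp [kl]

lemma kl_half (a s : ℝ) (hs : s ≠ 0) : kl (a/2) (s/2) = kl a s / 2 := by
  rcases eq_or_ne a 0 with rfl | ha
  · simp [kl]
  · unfold kl
    rw [Real.log_div ha two_ne_zero, Real.log_div hs two_ne_zero]
    ring

lemma kl_midpoint (a c s t : ℝ) (ha : 0 ≤ a) (hc : 0 ≤ c) (hs : 0 ≤ s) (ht : 0 ≤ t)
    (hs0 : s = 0 → a = 0) (ht0 : t = 0 → c = 0) :
    kl ((a+c)/2) ((s+t)/2) ≤ (kl a s + kl c t) / 2 := by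
  rcases eq_or_lt_of_le hs with rfl | hs
  · rw [hs0 rfl]
    rcases eq_or_lt_of_le ht with rfl | ht
    · rw [ht0 rfl]; simp [kl]
    · rw [kl_zero_left, zero_add, zero_add, kl_half c t (ne_of_gt ht)]; linarith
  rcases eq_or_lt_of_le ht with rfl | ht
  · rw [ht0 rfl, kl_zero_left, add_zero, add_zero, kl_half a s (ne_of_gt hs)]; linarith
  -- main case s, t > 0
  have hst : 0 < s + t := by linarith
  have key := Real.convexOn_mul_log.2 (Set.mem_Ici.2 (div_nonneg ha hs.le))
    (Set.mem_Ici.2 (div_nonneg hc ht.le)) (le_of_lt (div_pos hs hst))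
    (le_of_lt (div_pos ht hst)) (by field_simp)
  simp only [smul_eq_mul] at key
  have harg : s / (s+t) * (a/s) + t/(s+t) * (c/t) = (a+c)/(s+t) := by
    field_simp
  rw [harg] at key
  have key2 := mul_le_mul_of_nonneg_left key (by positivity : (0:ℝ) ≤ (s+t)/2)
  have e1 : (s+t)/2 * ((a+c)/(s+t) * Real.log ((a+c)/(s+t))) = kl ((a+c)/2) ((s+t)/2) := by
    rcases eq_or_lt_of_le (add_nonneg ha hc) with hac | hac
    · rw [← hac]; simp [kl]
    · unfold kl
      rw [Real.log_div (ne_of_gt hac) (ne_of_gt hst),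
        Real.log_div (ne_of_gt hac) two_ne_zero, Real.log_div (ne_of_gt hst) two_ne_zero]
      field_simp; ring
  have e2 : (s+t)/2 * (s/(s+t) * (a/s * Real.log (a/s))) = kl a s / 2 := by
    rcases eq_or_lt_of_le ha with rfl | ha'
    · simp [kl]
    · unfold kl
      rw [Real.log_div (ne_of_gt ha') (ne_of_gt hs)]
      field_simp
  have e3 : (s+t)/2 * (t/(s+t) * (c/t * Real.log (c/t))) = kl c t / 2 := by
    rcases eq_or_lt_of_le hc with rfl | hc'
    · simp [kl]
    · unfold kl
      rw [Real.log_div (ne_of_gt hc') (ne_of_gt ht)]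
      field_simp
  calc kl ((a+c)/2) ((s+t)/2) = (s+t)/2 * ((a+c)/(s+t) * Real.log ((a+c)/(s+t))) := e1.symm
    _ ≤ (s+t)/2 * (s/(s+t) * (a/s * Real.log (a/s)) + t/(s+t) * (c/t * Real.log (c/t))) := key2
    _ = (kl a s + kl c t) / 2 := by rw [mul_add, e2, e3]; ring

lemma ent2_eq_kl (a b : ℝ) : ent2 a b = (kl a ((a+b)/2) + kl b ((a+b)/2)) / 2 := by
  unfold ent2 kl; ring

lemma ent2_midpoint (a b c d : ℝ) (ha : 0 ≤ a) (hb : 0 ≤ b) (hc : 0 ≤ c) (hd : 0 ≤ d) :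
    ent2 ((a+c)/2) ((b+d)/2) ≤ (ent2 a b + ent2 c d) / 2 := by
  rw [ent2_eq_kl, ent2_eq_kl, ent2_eq_kl]
  have hm : ((a+c)/2 + (b+d)/2) = ((a+b)/2 + (c+d)/2) := by ring
  rw [hm]
  have h1 := kl_midpoint a c ((a+b)/2) ((c+d)/2) ha hc (by linarith) (by linarith)
    (fun h => by linarith) (fun h => by linarith)
  have h2 := kl_midpoint b d ((a+b)/2) ((c+d)/2) hb hd (by linarith) (by linarith)
    (fun h => by linarith) (fun h => by linarith)
  linarith

lemma cubeE_add (n : ℕ) (f g : (Fin n → Bool) → ℝ) :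
    cubeE n (fun x => f x + g x) = cubeE n f + cubeE n g := by
  unfold cubeE; rw [Finset.sum_add_distrib]; ring

lemma cubeE_sub (n : ℕ) (f g : (Fin n → Bool) → ℝ) :
    cubeE n (fun x => f x - g x) = cubeE n f - cubeE n g := by
  unfold cubeE; rw [Finset.sum_sub_distrib]; ring

lemma cubeE_div2 (n : ℕ) (f : (Fin n → Bool) → ℝ) :
    cubeE n (fun x => f x / 2) = cubeE n f / 2 := by
  unfold cubeE; rw [← Finset.sum_div]; ring

lemma cubeE_congr (n : ℕ) (f g : (Fin n → Bool) → ℝ) (h : ∀ x, f x = g x) :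
    cubeE n f = cubeE n g := by
  unfold cubeE; congr 1; exact Finset.sum_congr rfl fun x _ => h x

lemma cubeE_mono (n : ℕ) (f g : (Fin n → Bool) → ℝ) (h : ∀ x, f x ≤ g x) :
    cubeE n f ≤ cubeE n g := by
  unfold cubeE
  have h2 : (0:ℝ) ≤ 2 ^ n := by positivity
  exact div_le_div_of_nonneg_right (Finset.sum_le_sum fun x _ => h x) h2

lemma cube_sum_succ (n : ℕ) (G : (Fin (n+1) → Bool) → ℝ) :
    ∑ x : Fin (n+1) → Bool, G x
      = (∑ y : Fin n → Bool, G (Fin.cons false y)) + ∑ y : Fin n → Bool, G (Fin.cons true y) := by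
  rw [← (Fin.consEquiv (fun _ => Bool)).sum_comp G, Fintype.sum_prod_type, Fintype.sum_bool]
  simp [Fin.consEquiv, add_comm]

lemma cubeE_succ (n : ℕ) (G : (Fin (n+1) → Bool) → ℝ) :
    cubeE (n+1) G
      = (cubeE n (fun y => G (Fin.cons false y)) + cubeE n (fun y => G (Fin.cons true y))) / 2 := by
  unfold cubeE
  rw [cube_sum_succ, pow_succ]
  field_simp

theorem ent_subadd : ∀ (n : ℕ) (g : (Fin n → Bool) → ℝ), (∀ x, 0 ≤ g x) →
    cubeE n (fun x => g x * Real.log (g x)) - cubeE n g * Real.log (cubeE n g)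
      ≤ cubeE n (fun x => ∑ i, ent2 (g x) (g (Function.update x i (!x i)))) := by
  intro n
  induction n with
  | zero =>
    intro g hg
    simp [cubeE]
  | succ n ih =>
    intro g hg
    -- abbreviations (plain defs, no `set`)
    have hg0n : ∀ y : Fin n → Bool, 0 ≤ g (Fin.cons false y) := fun y => hg _
    have hg1n : ∀ y : Fin n → Bool, 0 ≤ g (Fin.cons true y) := fun y => hg _
    -- (A) mean
    have hA : cubeE (n+1) g
        = cubeE n (fun y => (g (Fin.cons false y) + g (Fin.cons true y)) / 2) := by
      rw [cubeE_succ]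
      rw [show (fun y : Fin n → Bool => (g (Fin.cons false y) + g (Fin.cons true y)) / 2)
            = (fun y : Fin n → Bool =>
                ((fun y => g (Fin.cons false y)) y + (fun y => g (Fin.cons true y)) y) / 2) from rfl,
        cubeE_div2, cubeE_add]
    -- (B)
    have hB : cubeE (n+1) (fun x => g x * Real.log (g x))
        = (cubeE n (fun y => g (Fin.cons false y) * Real.log (g (Fin.cons false y)))
           + cubeE n (fun y => g (Fin.cons true y) * Real.log (g (Fin.cons true y)))) / 2 := by
      rw [cubeE_succ]
    -- chain-rule piece
    have hent01 : cubeE n (fun y => ent2 (g (Fin.cons false y)) (g (Fin.cons true y)))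
        = (cubeE n (fun y => g (Fin.cons false y) * Real.log (g (Fin.cons false y)))
           + cubeE n (fun y => g (Fin.cons true y) * Real.log (g (Fin.cons true y)))) / 2
          - cubeE n (fun y => ((g (Fin.cons false y) + g (Fin.cons true y)) / 2)
              * Real.log ((g (Fin.cons false y) + g (Fin.cons true y)) / 2)) := by
      unfold ent2
      rw [cubeE_sub, cubeE_div2, cubeE_add]
    -- (C) coordinate decomposition
    have hdec : ∀ (b : Bool) (y : Fin n → Bool),
        (∑ i : Fin (n+1), ent2 (g (Fin.cons b y))
            (g (Function.update (Fin.cons b y) i (!((Fin.cons b y : Fin (n+1) → Bool) i)))))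
          = ent2 (g (Fin.cons b y)) (g (Fin.cons (!b) y))
            + ∑ i : Fin n, ent2 (g (Fin.cons b y))
                (g (Fin.cons b (Function.update y i (!y i)))) := by
      intro b y
      rw [Fin.sum_univ_succ]
      simp only [Fin.cons_zero, Fin.cons_succ, Fin.update_cons_zero, ← Fin.cons_update]
    have hRHS : cubeE (n+1) (fun x => ∑ i, ent2 (g x) (g (Function.update x i (!x i))))
        = cubeE n (fun y => ent2 (g (Fin.cons false y)) (g (Fin.cons true y)))
          + (cubeE n (fun y => ∑ i : Fin n, ent2 (g (Fin.cons false y))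
                (g (Fin.cons false (Function.update y i (!y i)))))
             + cubeE n (fun y => ∑ i : Fin n, ent2 (g (Fin.cons true y))
                (g (Fin.cons true (Function.update y i (!y i)))))) / 2 := by
      rw [cubeE_succ]
      simp only [hdec, Bool.not_false, Bool.not_true]
      rw [cubeE_add, cubeE_add]
      rw [show cubeE n (fun y => ent2 (g (Fin.cons true y)) (g (Fin.cons false y)))
            = cubeE n (fun y => ent2 (g (Fin.cons false y)) (g (Fin.cons true y))) from
        cubeE_congr _ _ _ fun y => ent2_comm _ _]
      ring
    -- IH applied to midpoint function
    have hIH := ih (fun y => (g (Fin.cons false y) + g (Fin.cons true y)) / 2)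
      (fun y => by have := hg0n y; have := hg1n y; positivity)
    -- pointwise midpoint bound
    have hmid : cubeE n (fun y => ∑ i : Fin n,
          ent2 ((g (Fin.cons false y) + g (Fin.cons true y)) / 2)
            ((g (Fin.cons false (Function.update y i (!y i)))
              + g (Fin.cons true (Function.update y i (!y i)))) / 2))
        ≤ (cubeE n (fun y => ∑ i : Fin n, ent2 (g (Fin.cons false y))
              (g (Fin.cons false (Function.update y i (!y i)))))
           + cubeE n (fun y => ∑ i : Fin n, ent2 (g (Fin.cons true y))
              (g (Fin.cons true (Function.update y i (!y i)))))) / 2 := by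
      rw [← cubeE_add, ← cubeE_div2]
      apply cubeE_mono
      intro y
      rw [← Finset.sum_add_distrib, Finset.sum_div]
      apply Finset.sum_le_sum
      intro i _
      exact ent2_midpoint _ _ _ _ (hg0n y) (hg0n _) (hg1n y) (hg1n _)
    rw [hA, hB, hRHS]
    have := hIH
    linarith [hent01, hmid, hIH]

noncomputable def Fd (s : ℝ) : ℝ :=
  ((1 + s) * Real.log (1 + s) - (1 - s) * Real.log (1 - s)) / s - Real.log (1 + s ^ 2)

noncomputable def Gf (s : ℝ) : ℝ :=
  (Real.log (1 + s) + Real.log (1 - s) + 2) * s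
    - ((1 + s) * Real.log (1 + s) - (1 - s) * Real.log (1 - s))

lemma psi_continuous : Continuous psi := by
  have h : psi = fun t =>
      (1 / 2) * ((fun u => u * Real.log u) ((1 - Real.sqrt t) ^ 2)) +
      (1 / 2) * ((fun u => u * Real.log u) ((1 + Real.sqrt t) ^ 2)) -
      ((fun u => u * Real.log u) (1 + t)) := by
    funext t; unfold psi; simp only; ring
  rw [h]
  have hml := Real.continuous_mul_log
  exact ((continuous_const.mul (hml.comp ((continuous_const.sub Real.continuous_sqrt).pow 2))).add
    (continuous_const.mul (hml.comp ((continuous_const.add Real.continuous_sqrt).pow 2)))).sub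
    (hml.comp (continuous_const.add continuous_id))

lemma hasDerivAt_psi {t : ℝ} (h0 : 0 < t) (h1 : t < 1) :
    HasDerivAt psi (Fd (Real.sqrt t)) t := by
  set s := Real.sqrt t with hs
  have hs0 : 0 < s := Real.sqrt_pos.2 h0
  have hs1 : s < 1 := by
    rw [hs, show (1:ℝ) = Real.sqrt 1 by simp]
    exact Real.sqrt_lt_sqrt h0.le h1
  have hts : t = s ^ 2 := (Real.sq_sqrt h0.le).symm
  have hsq : HasDerivAt Real.sqrt (1 / (2 * s)) t := Real.hasDerivAt_sqrt (ne_of_gt h0)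
  have hu1 : HasDerivAt (fun t => (1 - Real.sqrt t) ^ 2) (2 * (1 - s) * (-(1 / (2 * s)))) t := by
    have h := ((hasDerivAt_const t (1:ℝ)).sub hsq).pow 2
    refine h.congr_deriv ?_
    push_cast [Pi.sub_apply, ← hs]
    ring
  have hu2 : HasDerivAt (fun t => (1 + Real.sqrt t) ^ 2) (2 * (1 + s) * (1 / (2 * s))) t := by
    have h := ((hasDerivAt_const t (1:ℝ)).add hsq).pow 2
    refine h.congr_deriv ?_
    push_cast [Pi.add_apply, ← hs]
    ring
  have hn1 : ((1 - s) ^ 2 : ℝ) ≠ 0 := pow_ne_zero 2 (sub_ne_zero.2 (by linarith))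
  have hn2 : ((1 + s) ^ 2 : ℝ) ≠ 0 := pow_ne_zero 2 (by positivity)
  have hn3 : (1 + t : ℝ) ≠ 0 := by positivity
  have hc1 : HasDerivAt (fun t => (1 - Real.sqrt t) ^ 2 * Real.log ((1 - Real.sqrt t) ^ 2))
      ((Real.log ((1 - s) ^ 2) + 1) * (2 * (1 - s) * (-(1 / (2 * s))))) t := by
    have h := (Real.hasDerivAt_mul_log hn1).comp t hu1
    simpa only [Function.comp_def] using h
  have hc2 : HasDerivAt (fun t => (1 + Real.sqrt t) ^ 2 * Real.log ((1 + Real.sqrt t) ^ 2))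
      ((Real.log ((1 + s) ^ 2) + 1) * (2 * (1 + s) * (1 / (2 * s)))) t := by
    have h := (Real.hasDerivAt_mul_log hn2).comp t hu2
    simpa only [Function.comp_def] using h
  have hc3 : HasDerivAt (fun t => (1 + t) * Real.log (1 + t))
      ((Real.log (1 + t) + 1) * 1) t := by
    have hin : HasDerivAt (fun t : ℝ => 1 + t) 1 t := (hasDerivAt_id t).const_add 1
    have h := (Real.hasDerivAt_mul_log hn3).comp t hin
    simpa only [Function.comp_def] using h
  have hpsi : psi = fun t =>
      (1 / 2) * ((1 - Real.sqrt t) ^ 2 * Real.log ((1 - Real.sqrt t) ^ 2)) +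
      (1 / 2) * ((1 + Real.sqrt t) ^ 2 * Real.log ((1 + Real.sqrt t) ^ 2)) -
      (1 + t) * Real.log (1 + t) := by
    funext t; unfold psi; ring
  rw [hpsi]
  have htot := ((hc1.const_mul (1/2 : ℝ)).add (hc2.const_mul (1/2 : ℝ))).sub hc3
  refine htot.congr_deriv ?_
  unfold Fd
  rw [Real.log_pow, Real.log_pow, hts]
  push_cast
  field_simp
  ring

lemma Gf_zero : Gf 0 = 0 := by simp [Gf]

lemma hasDerivAt_Gf {s : ℝ} (h0 : 0 < s) (h1 : s < 1) :
    HasDerivAt Gf (s * (1 / (1 + s) - 1 / (1 - s))) s := by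
  have hn1 : (1 + s : ℝ) ≠ 0 := by positivity
  have hn2 : (1 - s : ℝ) ≠ 0 := sub_ne_zero.2 (by linarith)
  have ha1 : HasDerivAt (fun s : ℝ => (1 + s) * Real.log (1 + s))
      ((Real.log (1 + s) + 1) * 1) s := by
    have h := (Real.hasDerivAt_mul_log hn1).comp s ((hasDerivAt_id s).const_add 1)
    simpa only [Function.comp_def] using h
  have ha2 : HasDerivAt (fun s : ℝ => (1 - s) * Real.log (1 - s))
      ((Real.log (1 - s) + 1) * (-1)) s := by
    have hin : HasDerivAt (fun s : ℝ => 1 - s) (-1) s := (hasDerivAt_id s).const_sub 1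
    have h := (Real.hasDerivAt_mul_log hn2).comp s hin
    simpa only [Function.comp_def] using h
  have hl1 : HasDerivAt (fun s : ℝ => Real.log (1 + s)) (1 / (1 + s)) s := by
    have h := (Real.hasDerivAt_log hn1).comp s ((hasDerivAt_id s).const_add 1)
    rw [Function.comp_def] at h
    refine h.congr_deriv ?_
    field_simp
  have hl2 : HasDerivAt (fun s : ℝ => Real.log (1 - s)) (-(1 / (1 - s))) s := by
    have hin : HasDerivAt (fun s : ℝ => 1 - s) (-1) s := (hasDerivAt_id s).const_sub 1
    have h := (Real.hasDerivAt_log hn2).comp s hin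
    rw [Function.comp_def] at h
    refine h.congr_deriv ?_
    field_simp
  have hfirst : HasDerivAt (fun s : ℝ => (Real.log (1 + s) + Real.log (1 - s) + 2) * s)
      ((1 / (1 + s) + -(1 / (1 - s))) * s + (Real.log (1 + s) + Real.log (1 - s) + 2) * 1) s :=
    (((hl1.add hl2).add_const 2).mul (hasDerivAt_id s))
  have htot := hfirst.sub (ha1.sub ha2)
  have : Gf = fun s : ℝ => (Real.log (1 + s) + Real.log (1 - s) + 2) * s
      - ((1 + s) * Real.log (1 + s) - (1 - s) * Real.log (1 - s)) := rfl
  rw [this]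
  refine htot.congr_deriv ?_
  ring

lemma Gf_nonpos {s : ℝ} (h0 : 0 ≤ s) (h1 : s < 1) : Gf s ≤ 0 := by
  have hanti : AntitoneOn Gf (Set.Ico (0:ℝ) 1) := by
    apply antitoneOn_of_deriv_nonpos (convex_Ico (0:ℝ) 1)
    · -- continuity on Ico 0 1
      apply ContinuousOn.sub
      · apply ContinuousOn.mul
        · apply ContinuousOn.add
          · apply ContinuousOn.add
            · apply ContinuousOn.log
              · fun_prop
              · intro x hx; simp only [Set.mem_Ico] at hx; intro h; nlinarith [hx.1]
            · apply ContinuousOn.log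
              · fun_prop
              · intro x hx; simp only [Set.mem_Ico] at hx; intro h; nlinarith [hx.2]
          · exact continuousOn_const
        · exact continuousOn_id
      · apply ContinuousOn.sub
        · apply ContinuousOn.mul
          · fun_prop
          · apply ContinuousOn.log
            · fun_prop
            · intro x hx; simp only [Set.mem_Ico] at hx; intro h; nlinarith [hx.1]
        · apply ContinuousOn.mul
          · fun_prop
          · apply ContinuousOn.log
            · fun_prop
            · intro x hx; simp only [Set.mem_Ico] at hx; intro h; nlinarith [hx.2]
    · intro x hx
      rw [interior_Ico] at hx
      exact (hasDerivAt_Gf hx.1 hx.2).differentiableAt.differentiableWithinAt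
    · intro x hx
      rw [interior_Ico] at hx
      rw [(hasDerivAt_Gf hx.1 hx.2).deriv]
      have hx0 := hx.1
      have hx1 := hx.2
      have h : 1 / (1 + x) - 1 / (1 - x) ≤ 0 := by
        rw [sub_nonpos]
        exact one_div_le_one_div_of_le (by linarith) (by linarith)
      nlinarith
  rcases eq_or_lt_of_le h0 with rfl | h0'
  · rw [Gf_zero]
  · have h := hanti (Set.mem_Ico.2 ⟨le_refl 0, one_pos⟩) (Set.mem_Ico.2 ⟨h0, h1⟩) h0
    rwa [Gf_zero] at h

lemma hasDerivAt_Fd {s : ℝ} (h0 : 0 < s) (h1 : s < 1) :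
    HasDerivAt Fd (Gf s / s ^ 2 - 2 * s / (1 + s ^ 2)) s := by
  have hn1 : (1 + s : ℝ) ≠ 0 := by positivity
  have hn2 : (1 - s : ℝ) ≠ 0 := sub_ne_zero.2 (by linarith)
  have hn3 : (1 + s ^ 2 : ℝ) ≠ 0 := by positivity
  have ha1 : HasDerivAt (fun s : ℝ => (1 + s) * Real.log (1 + s))
      ((Real.log (1 + s) + 1) * 1) s := by
    have h := (Real.hasDerivAt_mul_log hn1).comp s ((hasDerivAt_id s).const_add 1)
    simpa only [Function.comp_def] using h
  have ha2 : HasDerivAt (fun s : ℝ => (1 - s) * Real.log (1 - s))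
      ((Real.log (1 - s) + 1) * (-1)) s := by
    have hin : HasDerivAt (fun s : ℝ => 1 - s) (-1) s := (hasDerivAt_id s).const_sub 1
    have h := (Real.hasDerivAt_mul_log hn2).comp s hin
    simpa only [Function.comp_def] using h
  have hA : HasDerivAt (fun s : ℝ => (1 + s) * Real.log (1 + s) - (1 - s) * Real.log (1 - s))
      (Real.log (1 + s) + Real.log (1 - s) + 2) s := by
    have h := ha1.sub ha2
    refine h.congr_deriv ?_; ring
  have hdiv : HasDerivAt
      (fun s : ℝ => ((1 + s) * Real.log (1 + s) - (1 - s) * Real.log (1 - s)) / s)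
      (((Real.log (1 + s) + Real.log (1 - s) + 2) * s
        - ((1 + s) * Real.log (1 + s) - (1 - s) * Real.log (1 - s)) * 1) / s ^ 2) s :=
    hA.div (hasDerivAt_id s) (ne_of_gt h0)
  have hlog : HasDerivAt (fun s : ℝ => Real.log (1 + s ^ 2)) (2 * s / (1 + s ^ 2)) s := by
    have hin : HasDerivAt (fun s : ℝ => 1 + s ^ 2) (2 * s) s := by
      have h := (hasDerivAt_pow 2 s).const_add 1
      norm_num at h
      exact h.const_add 1
    have h := (Real.hasDerivAt_log hn3).comp s hin
    rw [Function.comp_def] at h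
    refine h.congr_deriv ?_
    field_simp
  have htot := hdiv.sub hlog
  have hFd : Fd = fun s : ℝ =>
      ((1 + s) * Real.log (1 + s) - (1 - s) * Real.log (1 - s)) / s - Real.log (1 + s ^ 2) := rfl
  rw [hFd]
  refine htot.congr_deriv ?_
  unfold Gf
  ring

lemma Fd_antitone : AntitoneOn Fd (Set.Ioo (0:ℝ) 1) := by
  apply antitoneOn_of_deriv_nonpos (convex_Ioo (0:ℝ) 1)
  · intro x hx
    exact (hasDerivAt_Fd hx.1 hx.2).continuousAt.continuousWithinAt
  · intro x hx
    rw [interior_Ioo] at hx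
    exact (hasDerivAt_Fd hx.1 hx.2).differentiableAt.differentiableWithinAt
  · intro x hx
    rw [interior_Ioo] at hx
    rw [(hasDerivAt_Fd hx.1 hx.2).deriv]
    have hg := Gf_nonpos hx.1.le hx.2
    have h1 : Gf x / x ^ 2 ≤ 0 := by
      apply div_nonpos_iff.2
      right
      exact ⟨hg, sq_nonneg x⟩
    have h2 : 0 ≤ 2 * x / (1 + x ^ 2) := div_nonneg (by linarith [hx.1]) (by positivity)
    linarith

lemma Fd_nonneg {s : ℝ} (h0 : 0 < s) (h1 : s < 1) : 0 ≤ Fd s := by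
  have hl2 : Real.log (1 - s) ≤ 0 := Real.log_nonpos (by linarith) (by linarith)
  have hl1 : 0 ≤ Real.log (1 + s) := Real.log_nonneg (by linarith)
  have hle : Real.log (1 + s ^ 2) ≤ Real.log (1 + s) := by
    apply Real.log_le_log (by positivity)
    nlinarith
  have hl3 : 0 ≤ Real.log (1 + s ^ 2) := Real.log_nonneg (by nlinarith)
  have hnum : s * Real.log (1 + s ^ 2)
      ≤ (1 + s) * Real.log (1 + s) - (1 - s) * Real.log (1 - s) := by
    nlinarith
  unfold Fd
  rw [sub_nonneg, le_div_iff₀ h0]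
  linarith [hnum]

lemma deriv_psi {t : ℝ} (h0 : 0 < t) (h1 : t < 1) : deriv psi t = Fd (Real.sqrt t) :=
  (hasDerivAt_psi h0 h1).deriv

lemma sqrt_mem_Ioo {t : ℝ} (ht : t ∈ Set.Ioo (0:ℝ) 1) : Real.sqrt t ∈ Set.Ioo (0:ℝ) 1 := by
  constructor
  · exact Real.sqrt_pos.2 ht.1
  · rw [show (1:ℝ) = Real.sqrt 1 by simp]
    exact Real.sqrt_lt_sqrt ht.1.le ht.2

lemma psi_concaveOn : ConcaveOn ℝ (Set.Icc (0:ℝ) 1) psi := by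
  have hanti : AntitoneOn (deriv psi) (interior (Set.Icc (0:ℝ) 1)) := by
    rw [interior_Icc]
    intro a ha b hb hab
    rw [deriv_psi ha.1 ha.2, deriv_psi hb.1 hb.2]
    exact Fd_antitone (sqrt_mem_Ioo ha) (sqrt_mem_Ioo hb) (Real.sqrt_le_sqrt hab)
  exact hanti.concaveOn_of_deriv (convex_Icc 0 1) psi_continuous.continuousOn
    (by
      rw [interior_Icc]
      intro x hx
      exact (hasDerivAt_psi hx.1 hx.2).differentiableAt.differentiableWithinAt)

lemma psi_monotoneOn : MonotoneOn psi (Set.Icc (0:ℝ) 1) := by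
  apply monotoneOn_of_deriv_nonneg (convex_Icc (0:ℝ) 1) psi_continuous.continuousOn
  · rw [interior_Icc]
    intro x hx
    exact (hasDerivAt_psi hx.1 hx.2).differentiableAt.differentiableWithinAt
  · rw [interior_Icc]
    intro x hx
    rw [deriv_psi hx.1 hx.2]
    have h := sqrt_mem_Ioo hx
    exact Fd_nonneg h.1 h.2

lemma psi_one : psi 1 = 2 * Real.log 2 := by
  unfold psi
  rw [Real.sqrt_one]
  norm_num
  rw [show (4:ℝ) = 2^2 by norm_num, Real.log_pow]
  push_cast
  ring

lemma psi_zero : psi 0 = 0 := by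
  unfold psi
  rw [Real.sqrt_zero]
  norm_num

lemma ent2_sq_le (u v : ℝ) (hv : 0 ≤ v) (hvu : v ≤ u) :
    ent2 (u^2) (v^2) = ((u+v)^2/4) * psi ((u-v)^2/(u+v)^2) := by
  have hu : 0 ≤ u := le_trans hv hvu
  rcases eq_or_lt_of_le hu with rfl | hu
  · have hv0 : v = 0 := le_antisymm hvu hv
    subst hv0
    simp [ent2, psi]
  rcases eq_or_lt_of_le hv with rfl | hv
  · -- v = 0 case
    have hR : (u+0)^2/4 * psi ((u-0)^2/(u+0)^2) = u^2/4 * (2*Real.log 2) := by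
      rw [show (u-0)^2/(u+0)^2 = 1 by
        rw [sub_zero, add_zero]; exact div_self (by positivity), psi_one]
      ring_nf
    rw [hR]
    unfold ent2
    have l4 : Real.log (u^2) = 2*Real.log u := by
      rw [Real.log_pow]; push_cast; ring
    have l6 : Real.log ((u^2+0^2)/2) = 2*Real.log u - Real.log 2 := by
      rw [show (u^2+0^2)/2 = u^2/2 by ring, Real.log_div (by positivity) two_ne_zero, l4]
    rw [l4, l6]
    norm_num
    ring
  -- main case 0 < v ≤ u
  have hP : 0 < u + v := by linarith
  have hPne : (u+v) ≠ 0 := ne_of_gt hP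
  have hsqrt : Real.sqrt ((u-v)^2/(u+v)^2) = (u-v)/(u+v) := by
    rw [← div_pow]
    exact Real.sqrt_sq (div_nonneg (by linarith) hP.le)
  unfold psi ent2
  rw [hsqrt]
  have e1 : 1 - (u-v)/(u+v) = 2*v/(u+v) := by field_simp; ring
  have e2 : 1 + (u-v)/(u+v) = 2*u/(u+v) := by field_simp; ring
  have e3 : 1 + (u-v)^2/(u+v)^2 = 2*(u^2+v^2)/(u+v)^2 := by field_simp; ring
  rw [e1, e2, e3]
  have l1 : Real.log ((2*v/(u+v))^2) = 2*(Real.log 2 + Real.log v - Real.log (u+v)) := by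
    rw [Real.log_pow, Real.log_div (by positivity) hPne,
      Real.log_mul two_ne_zero (ne_of_gt hv)]
    push_cast; ring
  have l2 : Real.log ((2*u/(u+v))^2) = 2*(Real.log 2 + Real.log u - Real.log (u+v)) := by
    rw [Real.log_pow, Real.log_div (by positivity) hPne,
      Real.log_mul two_ne_zero (ne_of_gt hu)]
    push_cast; ring
  have l3 : Real.log (2*(u^2+v^2)/(u+v)^2)
      = Real.log 2 + Real.log (u^2+v^2) - 2*Real.log (u+v) := by
    rw [Real.log_div (by positivity) (by positivity),
      Real.log_mul two_ne_zero (by positivity), Real.log_pow]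
    push_cast; ring
  have l4 : Real.log (u^2) = 2*Real.log u := by rw [Real.log_pow]; push_cast; ring
  have l5 : Real.log (v^2) = 2*Real.log v := by rw [Real.log_pow]; push_cast; ring
  have l6 : Real.log ((u^2+v^2)/2) = Real.log (u^2+v^2) - Real.log 2 :=
    Real.log_div (by positivity) two_ne_zero
  rw [l1, l2, l3, l4, l5, l6]
  field_simp
  ring

lemma ent2_sq (u v : ℝ) (hu : 0 ≤ u) (hv : 0 ≤ v) :
    ent2 (u^2) (v^2) = ((u+v)^2/4) * psi ((u-v)^2/(u+v)^2) := by
  rcases le_total v u with h | h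
  · exact ent2_sq_le u v hv h
  · rw [ent2_comm, show ((u+v)^2 : ℝ) = (v+u)^2 by ring,
      show ((u-v)^2:ℝ) = (v-u)^2 by ring]
    exact ent2_sq_le v u hu h

-- Entropy nonnegativity
lemma entE_nonneg (n : ℕ) (g : (Fin n → Bool) → ℝ) (hg : ∀ x, 0 ≤ g x) :
    cubeE n g * Real.log (cubeE n g) ≤ cubeE n (fun x => g x * Real.log (g x)) := by
  have hcard : (Finset.univ : Finset (Fin n → Bool)).card = 2 ^ n := by
    simp [Finset.card_univ]
  have h := Real.convexOn_mul_log.map_sum_le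
    (t := (Finset.univ : Finset (Fin n → Bool)))
    (w := fun _ => ((2:ℝ) ^ n)⁻¹) (p := g)
    (fun _ _ => by positivity)
    (by rw [Finset.sum_const, hcard, nsmul_eq_mul]; push_cast; field_simp)
    (fun x _ => Set.mem_Ici.2 (hg x))
  simp only [smul_eq_mul] at h
  have e1 : ∑ x : Fin n → Bool, ((2:ℝ) ^ n)⁻¹ * g x = cubeE n g := by
    unfold cubeE
    rw [← Finset.mul_sum]
    ring
  have e2 : ∑ x : Fin n → Bool, ((2:ℝ)^n)⁻¹ * (g x * Real.log (g x))
      = cubeE n (fun x => g x * Real.log (g x)) := by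
    unfold cubeE
    rw [← Finset.mul_sum]
    ring
  rw [e1, e2] at h
  exact h

lemma cubeK2_pos (n : ℕ) (hn : 1 ≤ n) (f : (Fin n → Bool) → ℝ) (hf : f ≠ 0)
    (hfpos : ∀ x, 0 ≤ f x) : 0 < cubeK2 n f := by
  obtain ⟨x0, hx0⟩ : ∃ x, f x ≠ 0 := Function.ne_iff.1 hf
  have hx0' : 0 < f x0 := lt_of_le_of_ne (hfpos x0) (Ne.symm hx0)
  unfold cubeK2 cubeE
  have hterm : ∀ x : Fin n → Bool,
      0 ≤ ∑ i : Fin n, (f x + f (Function.update x i (!x i))) ^ 2 :=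
    fun x => Finset.sum_nonneg fun i _ => sq_nonneg _
  have hpos : 0 < ∑ i : Fin n, (f x0 + f (Function.update x0 i (!x0 i))) ^ 2 := by
    have i0 : Fin n := ⟨0, hn⟩
    apply Finset.sum_pos' (fun i _ => sq_nonneg _)
    refine ⟨i0, Finset.mem_univ _, ?_⟩
    have := hfpos (Function.update x0 i0 (!x0 i0))
    positivity
  have hsum : 0 < ∑ x : Fin n → Bool,
      ∑ i : Fin n, (f x + f (Function.update x i (!x i))) ^ 2 :=
    Finset.sum_pos' (fun x _ => hterm x) ⟨x0, Finset.mem_univ _, hpos⟩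
  positivity

lemma sq_sub_le_sq_add {a b : ℝ} (ha : 0 ≤ a) (hb : 0 ≤ b) : (a - b)^2 ≤ (a + b)^2 := by
  nlinarith [mul_nonneg ha hb]

/-- The core inequality: `Ent(f²) ≤ K² ψ(D²/(4K²))`. -/
lemma core_ineq (n : ℕ) (hn : 1 ≤ n) (f : (Fin n → Bool) → ℝ) (hf : f ≠ 0)
    (hfpos : ∀ x, 0 ≤ f x) :
    cubeEnt n f ≤ cubeK2 n f * psi (cubeD2 n f / (4 * cubeK2 n f)) := by
  have hK := cubeK2_pos n hn f hf hfpos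
  set K := cubeK2 n f with hKdef
  set D2 := cubeD2 n f with hD2def
  -- step 1: subadditivity
  have h1 : cubeEnt n f
      ≤ cubeE n (fun x => ∑ i, ent2 (f x ^ 2) (f (Function.update x i (!x i)) ^ 2)) := by
    have h := ent_subadd n (fun x => f x ^ 2) (fun x => sq_nonneg _)
    exact h
  -- Jensen setup
  set w : ((Fin n → Bool) × Fin n) → ℝ := fun q =>
    (f q.1 + f (Function.update q.1 q.2 (!q.1 q.2))) ^ 2 / (4 * 2 ^ n * K) with hwdef
  set p : ((Fin n → Bool) × Fin n) → ℝ := fun q =>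
    (f q.1 - f (Function.update q.1 q.2 (!q.1 q.2))) ^ 2
      / (f q.1 + f (Function.update q.1 q.2 (!q.1 q.2))) ^ 2 with hpdef
  have hC : (0:ℝ) < 4 * 2 ^ n * K := by positivity
  have hw0 : ∀ q ∈ (Finset.univ : Finset ((Fin n → Bool) × Fin n)), 0 ≤ w q :=
    fun q _ => div_nonneg (sq_nonneg _) hC.le
  have hsumK : ∑ x : Fin n → Bool, ∑ i : Fin n,
      (f x + f (Function.update x i (!x i))) ^ 2 = 4 * 2 ^ n * K := by
    rw [hKdef]
    unfold cubeK2 cubeE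
    field_simp
  have hw1 : ∑ q : (Fin n → Bool) × Fin n, w q = 1 := by
    rw [hwdef]
    simp only
    rw [← Finset.sum_div, Fintype.sum_prod_type, hsumK]
    field_simp
  have hpmem : ∀ q ∈ (Finset.univ : Finset ((Fin n → Bool) × Fin n)),
      p q ∈ Set.Icc (0:ℝ) 1 := by
    intro q _
    constructor
    · exact div_nonneg (sq_nonneg _) (sq_nonneg _)
    · rcases eq_or_lt_of_le (sq_nonneg (f q.1 + f (Function.update q.1 q.2 (!q.1 q.2)))) with h | h
      · rw [hpdef]; simp only [← h, div_zero]; norm_num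
      · rw [hpdef]
        simp only
        rw [div_le_one h]
        exact sq_sub_le_sq_add (hfpos _) (hfpos _)
  have hjensen := psi_concaveOn.le_map_sum hw0 hw1 hpmem
  simp only [smul_eq_mul] at hjensen
  -- identify ∑ w * p = D2 / (4K)
  have hwp : ∀ q : (Fin n → Bool) × Fin n, w q * p q
      = (f q.1 - f (Function.update q.1 q.2 (!q.1 q.2))) ^ 2 / (4 * 2 ^ n * K) := by
    intro q
    rw [hwdef, hpdef]
    simp only
    set a := f q.1
    set b := f (Function.update q.1 q.2 (!q.1 q.2))
    rcases eq_or_ne ((a + b) ^ 2) 0 with h | h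
    · have hab : a + b = 0 := by
        exact pow_eq_zero_iff (n := 2) (by norm_num) |>.1 h
      have ha : a = 0 := by have := hfpos q.1; have := hfpos (Function.update q.1 q.2 (!q.1 q.2)); linarith [hab]
      have hb : b = 0 := by linarith [hab, ha]
      rw [ha, hb]
      norm_num
    · rw [div_mul_div_comm, mul_comm ((a + b) ^ 2) ((a - b) ^ 2), mul_div_mul_right _ _ h]
  have hsummp : ∑ q : (Fin n → Bool) × Fin n, w q * p q = D2 / (4 * K) := by
    rw [Finset.sum_congr rfl (fun q _ => hwp q), ← Finset.sum_div, Fintype.sum_prod_type, hD2def]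
    unfold cubeD2 cubeE
    rw [div_div]
    congr 1
    ring
  have hwpsi : ∀ q : (Fin n → Bool) × Fin n, w q * psi (p q)
      = ent2 (f q.1 ^ 2) (f (Function.update q.1 q.2 (!q.1 q.2)) ^ 2) / (2 ^ n * K) := by
    intro q
    rw [ent2_sq _ _ (hfpos _) (hfpos _), hwdef, hpdef]
    simp only
    rw [show ((4:ℝ) * 2 ^ n * K) = 4 * (2 ^ n * K) by ring, ← div_div, div_mul_eq_mul_div]
  have hsumpsi : ∑ q : (Fin n → Bool) × Fin n, w q * psi (p q)
      = cubeE n (fun x => ∑ i, ent2 (f x ^ 2) (f (Function.update x i (!x i)) ^ 2)) / K := by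
    rw [Finset.sum_congr rfl (fun q _ => hwpsi q), ← Finset.sum_div, Fintype.sum_prod_type]
    unfold cubeE
    rw [div_div]
  have h2 : cubeE n (fun x => ∑ i, ent2 (f x ^ 2) (f (Function.update x i (!x i)) ^ 2))
      = K * ∑ q : (Fin n → Bool) × Fin n, w q * psi (p q) := by
    rw [hsumpsi]
    field_simp
  calc cubeEnt n f
      ≤ cubeE n (fun x => ∑ i, ent2 (f x ^ 2) (f (Function.update x i (!x i)) ^ 2)) := h1
    _ = K * ∑ q : (Fin n → Bool) × Fin n, w q * psi (p q) := h2
    _ ≤ K * psi (D2 / (4 * K)) := by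
        apply mul_le_mul_of_nonneg_left _ hK.le
        rw [← hsummp]
        exact hjensen

/-- For a nonzero nonnegative `f` on `{0,1}^n`,
`D²(f) ≥ 4·K²(f)·φ(Ent(f²)/K²(f))`, where `φ : [0, 2 log 2] → [0,1]` is the
inverse of `ψ`. -/
theorem D2_ge_of_phi (n : ℕ) (hn : 1 ≤ n)
    (f : (Fin n → Bool) → ℝ) (hf : f ≠ 0) (hfpos : ∀ x, 0 ≤ f x)
    (φ : ℝ → ℝ)
    (hφmem : ∀ y ∈ Set.Icc (0 : ℝ) (2 * Real.log 2), φ y ∈ Set.Icc (0 : ℝ) 1)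
    (hφright : ∀ y ∈ Set.Icc (0 : ℝ) (2 * Real.log 2), psi (φ y) = y)
    (hφleft : ∀ t ∈ Set.Icc (0 : ℝ) 1, φ (psi t) = t) :
    cubeD2 n f ≥ 4 * cubeK2 n f * φ (cubeEnt n f / cubeK2 n f) := by
  have hK := cubeK2_pos n hn f hf hfpos
  have hcore := core_ineq n hn f hf hfpos
  set K := cubeK2 n f with hKdef
  set D2 := cubeD2 n f with hD2def
  set Ent := cubeEnt n f with hEntdef
  have hD2nn : 0 ≤ D2 := by
    rw [hD2def]
    unfold cubeD2 cubeE
    positivity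
  have hD2le : D2 ≤ 4 * K := by
    have h := cubeE_mono n (fun x => ∑ i : Fin n, (f x - f (Function.update x i (!x i))) ^ 2)
      (fun x => ∑ i : Fin n, (f x + f (Function.update x i (!x i))) ^ 2)
      (fun x => Finset.sum_le_sum fun i _ => sq_sub_le_sq_add (hfpos _) (hfpos _))
    rw [hD2def, hKdef]
    unfold cubeD2 cubeK2
    linarith
  have ht1mem : D2 / (4 * K) ∈ Set.Icc (0:ℝ) 1 := by
    constructor
    · exact div_nonneg hD2nn (by positivity)
    · rw [div_le_one (by positivity)]
      linarith
  have h1mem : (1:ℝ) ∈ Set.Icc (0:ℝ) 1 := by constructor <;> norm_num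
  have hEntnn : 0 ≤ Ent := by
    have h := entE_nonneg n (fun x => f x ^ 2) (fun x => sq_nonneg _)
    rw [hEntdef]
    unfold cubeEnt
    linarith
  have hy1 : 0 ≤ Ent / K := div_nonneg hEntnn hK.le
  have hy2 : Ent / K ≤ 2 * Real.log 2 := by
    rw [div_le_iff₀ hK]
    have hp1 : psi (D2 / (4 * K)) ≤ psi 1 := psi_monotoneOn ht1mem h1mem ht1mem.2
    rw [psi_one] at hp1
    nlinarith [hcore]
  have hymem : Ent / K ∈ Set.Icc (0:ℝ) (2 * Real.log 2) := ⟨hy1, hy2⟩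
  have ht2mem := hφmem _ hymem
  have ht2le : φ (Ent / K) ≤ D2 / (4 * K) := by
    by_contra hcon
    push_neg at hcon
    have hst : psi (D2 / (4 * K)) ≤ psi (φ (Ent / K)) :=
      psi_monotoneOn ht1mem ht2mem hcon.le
    have hy_le : Ent / K ≤ psi (D2 / (4 * K)) := by
      rw [div_le_iff₀ hK]
      nlinarith [hcore]
    have heq : psi (D2 / (4 * K)) = Ent / K := by
      rw [hφright _ hymem] at hst
      linarith
    have hfl := hφleft _ ht1mem
    rw [heq] at hfl
    rw [hfl] at hcon
    exact lt_irrefl _ hcon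
  have : 4 * K * φ (Ent / K) ≤ 4 * K * (D2 / (4 * K)) :=
    mul_le_mul_of_nonneg_left ht2le (by positivity)
  have he : 4 * K * (D2 / (4 * K)) = D2 := by field_simp
  rw [ge_iff_le]
  calc 4 * K * φ (Ent / K) ≤ 4 * K * (D2 / (4 * K)) := this
    _ = D2 := he
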